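/- Let A > 0, σ < 0, R > 0, and suppose λ < 0 satisfies |λ| = |σ|·A + |σ|·q·coth(qR) with q = √(A² − λ) > 0 (equivalently λ = σ(A + q·coth(qR))). Then λ ≤ −σ² + 2Aσ. -/
import Mathlib


/-- For A > 0, σ < 0, R > 0, λ < 0 with q = √(A²−λ) > 0 and
λ = σ(A + q coth(qR)), one has λ ≤ −σ² + 2Aσ. -/
theorem stmt5 (A σ R lam q : ℝ) (hA : 0 < A) (hσ : σ < 0) (hR : 0 < R)
    (hlam : lam < 0) (hq : q = Real.sqrt (A ^ 2 - lam)) (hqpos : 0 < q)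
    (heq : lam = σ * (A + q * (Real.cosh (q * R) / Real.sinh (q * R)))) :
    lam ≤ -σ ^ 2 + 2 * A * σ := by
  have hx : 0 < q * R := mul_pos hqpos hR
  have hs : 0 < Real.sinh (q * R) := Real.sinh_pos_iff.2 hx
  have hc : Real.sinh (q * R) < Real.cosh (q * R) := by nlinarith [Real.cosh_sub_sinh (q*R), Real.exp_pos (-(q*R))]
  have hcoth : 1 < Real.cosh (q * R) / Real.sinh (q * R) := (one_lt_div hs).2 hc
  have hq2 : q ^ 2 = A ^ 2 - lam := by
    rw [hq]; exact Real.sq_sqrt (by nlinarith)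
  have h1 : lam ≤ σ * (A + q) := by
    rw [heq]
    have : A + q ≤ A + q * (Real.cosh (q * R) / Real.sinh (q * R)) := by nlinarith
    nlinarith
  have h2 : -σ * q ≤ σ * A - lam := by nlinarith
  have h3 : (0:ℝ) ≤ -σ * q := by nlinarith
  have h4 : (-σ * q) * (-σ * q) ≤ (σ * A - lam) * (σ * A - lam) :=
    mul_le_mul h2 h2 h3 (le_trans h3 h2)
  nlinarith [h4, hq2, mul_pos (neg_pos.2 hlam) (neg_pos.2 hlam)]
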